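/- Let γ and p be trace-class operators with 0 ≤ γ ≤ 1, p an orthogonal projection of rank N, and Tr γ = Tr p = N. Then the trace norm satisfies ‖γ − p‖_{tr} ≤ 2√N ‖γ − p‖_{HS}, where ‖·‖_{HS} is the Hilbert–Schmidt norm. -/

import Mathlib

open scoped BigOperators

section Aux

variable {H : Type*} [NormedAddCommGroup H] [InnerProductSpace ℂ H] [CompleteSpace H]
  {ι : Type*}

lemma aux_term_eq (x y : H) :
    ((inner ℂ x y : ℂ) * (inner ℂ y x : ℂ)).re = ‖(inner ℂ x y : ℂ)‖ ^ 2 := by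
  rw [← inner_conj_symm x y, mul_comm, Complex.mul_conj, Complex.ofReal_re]
  simp only [Complex.normSq_eq_norm_sq, Complex.norm_conj]

lemma aux_parseval (e : HilbertBasis ι ℂ H) {m : ℕ} (u : Fin m → H)
    (hu : Orthonormal ℂ u) :
    HasSum (fun i => ∑ j, ‖(inner ℂ (u j) (e i) : ℂ)‖ ^ 2) (m : ℝ) := by
  have h : ∀ j : Fin m, HasSum (fun i => ‖(inner ℂ (u j) (e i) : ℂ)‖ ^ 2) 1 := by
    intro j
    have h1 := (e.hasSum_inner_mul_inner (u j) (u j)).mapL Complex.reCLM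
    have h2 : (Complex.reCLM (inner ℂ (u j) (u j) : ℂ)) = 1 := by
      have : RCLike.re (inner ℂ (u j) (u j) : ℂ) = ‖u j‖ ^ 2 := inner_self_eq_norm_sq (u j)
      rw [RCLike.re_to_complex] at this
      simp only [Complex.reCLM_apply, this, hu.1 j, one_pow]
    rw [h2] at h1
    refine h1.congr_fun fun i => ?_
    simp only [Complex.reCLM_apply]
    exact (aux_term_eq (u j) (e i)).symm
  have := hasSum_sum (s := (Finset.univ : Finset (Fin m)))
    (f := fun j i => ‖(inner ℂ (u j) (e i) : ℂ)‖ ^ 2)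
    (a := fun _ => (1 : ℝ)) (fun j _ => h j)
  simpa using this

end Aux

/-- **Trace-norm versus Hilbert–Schmidt norm bound.**
Let `γ` and `p` be trace-class operators with `0 ≤ γ ≤ 1`, `p` an orthogonal projection
of rank `N`, and `Tr γ = Tr p = N`.  Diagonalizing the compact self-adjoint operator
`γ − p` in a Hilbert basis `e` with eigenvalues `μ i`, the trace norm
`‖γ − p‖_tr = Σ |μ i|` and Hilbert–Schmidt norm `‖γ − p‖_HS = (Σ μ i²)^{1/2}` satisfy
`‖γ − p‖_tr ≤ 2 √N ‖γ − p‖_HS`. -/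
theorem trace_norm_le_sqrtN_HS
    {H : Type*} [NormedAddCommGroup H] [InnerProductSpace ℂ H] [CompleteSpace H]
    {ι : Type*} (N : ℕ)
    (γ p : H →L[ℂ] H)
    (hγpos : γ.IsPositive) (hγle : (1 - γ).IsPositive)
    (hp : IsIdempotentElem p) (hpsa : IsSelfAdjoint p)
    (hrank : Module.finrank ℂ (LinearMap.range p.toLinearMap) = N)
    (e : HilbertBasis ι ℂ H)
    (htrγ : HasSum (fun i => (inner ℂ (e i) (γ (e i)) : ℂ).re) (N : ℝ))
    (μ : ι → ℝ)
    (heig : ∀ i, (γ - p) (e i) = ((μ i : ℝ) : ℂ) • e i) :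
    ∑' i, |μ i| ≤ 2 * Real.sqrt N * Real.sqrt (∑' i, μ i ^ 2) := by
  classical
  have he : Orthonormal ℂ (⇑e) := e.orthonormal
  have hnorm1 : ∀ i, ‖e i‖ = 1 := he.1
  set V := LinearMap.range p.toLinearMap with hV
  have hsym : (p : H →ₗ[ℂ] H).IsSymmetric :=
    ContinuousLinearMap.isSelfAdjoint_iff_isSymmetric.mp hpsa
  have hsym' : ∀ x y : H, (inner ℂ (p x) y : ℂ) = inner ℂ x (p y) := fun x y => hsym x y
  have hpp : ∀ x : H, p (p x) = p x := by
    intro x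
    rw [← ContinuousLinearMap.mul_apply, hp]
  have hfix : ∀ x : H, x ∈ V → p x = x := by
    rintro x ⟨y, rfl⟩
    exact hpp y
  have hmemV : ∀ i, p (e i) ∈ V := fun i => LinearMap.mem_range_self _ _
  have hdnorm : ∀ i, (inner ℂ (e i) (p (e i)) : ℂ).re = ‖p (e i)‖ ^ 2 := by
    intro i
    have h1 : (inner ℂ (e i) (p (e i)) : ℂ) = inner ℂ (p (e i)) (p (e i)) := by
      conv_lhs => rw [← hpp (e i)]
      exact (hsym' (e i) (p (e i))).symm
    rw [h1, ← RCLike.re_to_complex]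
    exact inner_self_eq_norm_sq (p (e i))
  have hμi : ∀ i, μ i = (inner ℂ (e i) (γ (e i)) : ℂ).re - (inner ℂ (e i) (p (e i)) : ℂ).re := by
    intro i
    have h3 : (inner ℂ (e i) (γ (e i)) : ℂ) - inner ℂ (e i) (p (e i)) = (μ i : ℂ) := by
      rw [← inner_sub_right, ← ContinuousLinearMap.sub_apply, heig i, inner_smul_right,
        inner_self_eq_norm_sq_to_K, hnorm1 i]
      simp
    have := congrArg Complex.re h3
    simpa using this.symm
  have habs_le : ∀ i, |μ i| ≤ ‖γ - p‖ := by
    intro i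
    have h1 : ‖(γ - p) (e i)‖ = |μ i| := by
      rw [heig i, norm_smul, hnorm1 i]
      simp
    calc |μ i| = ‖(γ - p) (e i)‖ := h1.symm
      _ ≤ ‖γ - p‖ * ‖e i‖ := (γ - p).le_opNorm (e i)
      _ = ‖γ - p‖ := by rw [hnorm1 i, mul_one]
  have hγnn : ∀ x : H, 0 ≤ ((inner ℂ x (γ x) : ℂ)).re := by
    intro x
    have := hγpos.inner_nonneg_right x
    exact (Complex.nonneg_iff.mp this).1
  by_cases hfd : FiniteDimensional ℂ V
  · -- ===================== finite rank case =====================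
    have hrank' : Module.finrank ℂ V = N := hrank
    let u0 := (stdOrthonormalBasis ℂ V).reindex (finCongr hrank')
    let u : Fin N → H := fun j => ((u0 j : V) : H)
    have hu : Orthonormal ℂ u := u0.orthonormal.comp_linearIsometry V.subtypeₗᵢ
    have hufix : ∀ j, p (u j) = u j := fun j => hfix _ (u0 j).2
    have hinner_u : ∀ j i, (inner ℂ (u j) (p (e i)) : ℂ) = inner ℂ (u j) (e i) := by
      intro j i
      rw [← hsym' (u j) (e i), hufix j]
    have hkey : ∀ i, (inner ℂ (e i) (p (e i)) : ℂ).re = ∑ j, ‖(inner ℂ (u j) (e i) : ℂ)‖ ^ 2 := by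
      intro i
      rw [hdnorm i]
      set w : V := (⟨p (e i), hmemV i⟩ : V) with hw
      have h1 := u0.sum_inner_mul_inner w w
      have h2 := congrArg Complex.re h1
      rw [Complex.re_sum] at h2
      have h3 : ∀ j, ((inner ℂ w (u0 j) : ℂ) * inner ℂ (u0 j) w).re
          = ‖(inner ℂ (u j) (e i) : ℂ)‖ ^ 2 := by
        intro j
        have hj : (inner ℂ w (u0 j) : ℂ) = inner ℂ (e i) (u j) := by
          rw [Submodule.coe_inner]
          show (inner ℂ (p (e i)) (u j) : ℂ) = _
          rw [hsym' (e i) (u j), hufix j]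
        have hj' : (inner ℂ (u0 j) w : ℂ) = inner ℂ (u j) (e i) := by
          rw [Submodule.coe_inner]
          exact hinner_u j i
        rw [hj, hj']
        rw [aux_term_eq (e i) (u j)]
        rw [norm_inner_symm]
      have h4 : ((inner ℂ w w : ℂ)).re = ‖p (e i)‖ ^ 2 := by
        have h5 : RCLike.re (inner ℂ w w : ℂ) = ‖w‖ ^ 2 := inner_self_eq_norm_sq w
        rw [RCLike.re_to_complex] at h5
        rw [h5]
        congr 1
      calc ‖p (e i)‖ ^ 2 = ((inner ℂ w w : ℂ)).re := h4.symm
        _ = ∑ j, ((inner ℂ w (u0 j) : ℂ) * inner ℂ (u0 j) w).re := h2.symm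
        _ = ∑ j, ‖(inner ℂ (u j) (e i) : ℂ)‖ ^ 2 := Finset.sum_congr rfl fun j _ => h3 j
    have hd : HasSum (fun i => (inner ℂ (e i) (p (e i)) : ℂ).re) (N : ℝ) := by
      have h := aux_parseval e u hu
      exact h.congr_fun fun i => hkey i
    have hμsum : HasSum μ (0 : ℝ) := by
      have h := htrγ.sub hd
      rw [sub_self] at h
      exact h.congr_fun fun i => hμi i
    -- at most N negative eigenvalues
    have hfinset : ∀ s : Finset ι, (∀ i ∈ s, μ i < 0) → s.card ≤ N := by
      intro s hs
      have hlin : LinearIndependent ℂ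
          (fun i : s => (⟨p (e (i : ι)), hmemV (i : ι)⟩ : V)) := by
        rw [linearIndependent_iff']
        intro t c hsum0 a ha
        set x : H := ∑ j ∈ t, c j • e (j : ι) with hx
        have hpx : p x = 0 := by
          have hcoe : ((∑ j ∈ t, c j • (⟨p (e (j : ι)), hmemV (j : ι)⟩ : V) : V) : H) = 0 := by
            rw [hsum0]; rfl
          have hcoe' : ∑ j ∈ t, c j • p (e (j : ι)) = 0 := by
            simpa using hcoe
          rw [hx, map_sum]
          simpa only [map_smul] using hcoe'
        have hγx : 0 ≤ ((inner ℂ x (γ x) : ℂ)).re := hγnn x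
        have hgx : (inner ℂ x (γ x) : ℂ) = inner ℂ x ((γ - p) x) := by
          have : (γ - p) x = γ x - p x := rfl
          rw [this, hpx, sub_zero]
        have hval : (inner ℂ x ((γ - p) x) : ℂ)
            = ∑ j ∈ t, (starRingEnd ℂ) (c j) * (c j * (μ (j : ι) : ℂ)) := by
          have hmap : (γ - p) x = ∑ j ∈ t, (c j * (μ (j : ι) : ℂ)) • e (j : ι) := by
            rw [hx, map_sum]
            refine Finset.sum_congr rfl fun j _ => ?_
            rw [map_smul, heig, smul_smul]
          rw [hx, hmap]
          exact (he.comp (fun j : s => (j : ι)) Subtype.val_injective).inner_sum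
            c (fun j => c j * (μ (j : ι) : ℂ)) t
        have hre : (0 : ℝ) ≤ ∑ j ∈ t, Complex.normSq (c j) * μ (j : ι) := by
          have h6 := hγx
          rw [hgx, hval, Complex.re_sum] at h6
          refine le_of_le_of_eq h6 (Finset.sum_congr rfl fun j _ => ?_)
          have : (starRingEnd ℂ) (c j) * (c j * (μ (j : ι) : ℂ))
              = ((Complex.normSq (c j) * μ (j : ι) : ℝ) : ℂ) := by
            rw [← mul_assoc, mul_comm ((starRingEnd ℂ) (c j)) (c j), Complex.mul_conj]
            push_cast
            ring
          rw [this, Complex.ofReal_re]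
        have hterm : ∀ j ∈ t, Complex.normSq (c j) * μ (j : ι) ≤ 0 := fun j _ =>
          mul_nonpos_of_nonneg_of_nonpos (Complex.normSq_nonneg _) (le_of_lt (hs _ j.2))
        have hzero := (Finset.sum_eq_zero_iff_of_nonpos hterm).mp
          (le_antisymm (Finset.sum_nonpos hterm) hre) a ha
        have hμa : μ (a : ι) ≠ 0 := ne_of_lt (hs _ a.2)
        have : Complex.normSq (c a) = 0 := by
          rcases mul_eq_zero.mp hzero with h | h
          · exact h
          · exact absurd h hμa
        exact Complex.normSq_eq_zero.mp this
      haveI : Module.Finite ℂ V := hfd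
      have := hlin.fintype_card_le_finrank
      simpa [Fintype.card_coe, hrank'] using this
    have hKfin : {i | μ i < 0}.Finite := by
      by_contra hinf
      obtain ⟨t, hts, htc⟩ := Set.Infinite.exists_subset_card_eq hinf (N + 1)
      have := hfinset t (fun i hi => hts (Finset.mem_coe.mpr hi))
      omega
    set Kf := hKfin.toFinset with hKf
    have hKneg : ∀ i ∈ Kf, μ i < 0 := fun i hi => (hKfin.mem_toFinset).mp hi
    have hKcard : Kf.card ≤ N := hfinset Kf hKneg
    set n : ι → ℝ := fun i => max (-μ i) 0 with hn
    have hn0 : ∀ i ∉ Kf, n i = 0 := by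
      intro i hi
      have : ¬ μ i < 0 := fun h => hi (hKfin.mem_toFinset.mpr h)
      simp only [hn]
      exact max_eq_right (by linarith [not_lt.mp this])
    have hnK : ∀ i ∈ Kf, n i = -μ i := by
      intro i hi
      exact max_eq_left (by linarith [hKneg i hi])
    have hnsum : Summable n := summable_of_ne_finset_zero hn0
    have habs : ∀ i, |μ i| = μ i + 2 * n i := by
      intro i
      rcases le_or_gt 0 (μ i) with h | h
      · rw [abs_of_nonneg h, hn]
        simp only [max_eq_right (by linarith : -μ i ≤ 0)]
        ring
      · rw [abs_of_neg h, hn]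
        simp only [max_eq_left (by linarith : (0:ℝ) ≤ -μ i)]
        ring
    have hasum : Summable (fun i => |μ i|) :=
      ((hμsum.summable.add (hnsum.mul_left 2)).congr fun i => (habs i).symm)
    have htsum_abs : ∑' i, |μ i| = 2 * ∑ i ∈ Kf, (-μ i) := by
      calc ∑' i, |μ i| = ∑' i, (μ i + 2 * n i) := tsum_congr habs
        _ = (∑' i, μ i) + ∑' i, 2 * n i := Summable.tsum_add hμsum.summable (hnsum.mul_left 2)
        _ = 0 + 2 * ∑' i, n i := by rw [hμsum.tsum_eq, tsum_mul_left]
        _ = 2 * ∑ i ∈ Kf, n i := by rw [zero_add, tsum_eq_sum hn0]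
        _ = 2 * ∑ i ∈ Kf, (-μ i) := by
            congr 1
            exact Finset.sum_congr rfl fun i hi => hnK i hi
    have hsq : Summable (fun i => μ i ^ 2) := by
      refine Summable.of_nonneg_of_le (fun i => sq_nonneg _) (fun i => ?_)
        (hasum.mul_left ‖γ - p‖)
      calc μ i ^ 2 = |μ i| * |μ i| := by rw [← sq_abs, sq]
        _ ≤ ‖γ - p‖ * |μ i| := mul_le_mul_of_nonneg_right (habs_le i) (abs_nonneg _)
    have hCS : ∑ i ∈ Kf, (-μ i) ≤ Real.sqrt N * Real.sqrt (∑' i, μ i ^ 2) := by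
      have h1 : (∑ i ∈ Kf, (-μ i)) ^ 2 ≤ (Kf.card : ℝ) * ∑ i ∈ Kf, μ i ^ 2 := by
        have := Finset.sum_mul_sq_le_sq_mul_sq Kf (fun _ => (1 : ℝ)) (fun i => -μ i)
        simpa [neg_sq] using this
      have h2 : (Kf.card : ℝ) * ∑ i ∈ Kf, μ i ^ 2 ≤ (N : ℝ) * ∑' i, μ i ^ 2 := by
        refine mul_le_mul (by exact_mod_cast hKcard)
          (Summable.sum_le_tsum Kf (fun i _ => sq_nonneg _) hsq)
          (Finset.sum_nonneg fun i _ => sq_nonneg _) (Nat.cast_nonneg N)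
      have h0 : 0 ≤ ∑ i ∈ Kf, (-μ i) :=
        Finset.sum_nonneg fun i hi => by linarith [hKneg i hi]
      calc ∑ i ∈ Kf, (-μ i) = Real.sqrt ((∑ i ∈ Kf, (-μ i)) ^ 2) := (Real.sqrt_sq h0).symm
        _ ≤ Real.sqrt ((N : ℝ) * ∑' i, μ i ^ 2) := Real.sqrt_le_sqrt (h1.trans h2)
        _ = Real.sqrt N * Real.sqrt (∑' i, μ i ^ 2) := Real.sqrt_mul (Nat.cast_nonneg N) _
    rw [htsum_abs]
    calc 2 * ∑ i ∈ Kf, (-μ i) ≤ 2 * (Real.sqrt N * Real.sqrt (∑' i, μ i ^ 2)) := by linarith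
      _ = 2 * Real.sqrt N * Real.sqrt (∑' i, μ i ^ 2) := by ring
  · -- ===================== infinite rank case =====================
    have hN0 : N = 0 := by rw [← hrank]; exact Module.finrank_of_not_finite hfd
    have hg0 : ∀ i, (inner ℂ (e i) (γ (e i)) : ℂ).re = 0 := by
      have h0 : HasSum (fun i => (inner ℂ (e i) (γ (e i)) : ℂ).re) 0 := by
        rw [hN0] at htrγ
        simpa using htrγ
      have := (hasSum_zero_iff_of_nonneg (fun i => hγnn (e i))).mp h0
      exact fun i => congrFun this i
    have habs_eq : ∀ i, |μ i| = ‖p (e i)‖ ^ 2 := by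
      intro i
      have : μ i = -‖p (e i)‖ ^ 2 := by
        rw [hμi i, hg0 i, hdnorm i]; ring
      rw [this, abs_neg, abs_of_nonneg (sq_nonneg _)]
    have hnotsum : ¬ Summable (fun i => |μ i|) := by
      intro hs
      set S := ∑' i, |μ i| with hS
      obtain ⟨m, hm⟩ := exists_nat_gt S
      have hrk : (m : Cardinal) ≤ Module.rank ℂ V := by
        have h1 : ¬ Module.rank ℂ V < Cardinal.aleph0 := fun h =>
          hfd (Module.rank_lt_aleph0_iff.mp h)
        exact le_trans (Cardinal.nat_lt_aleph0 m).le (not_lt.mp h1)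
      obtain ⟨f, hf⟩ := exists_linearIndependent_of_le_rank hrk
      set W := Submodule.span ℂ (Set.range f) with hW
      haveI : FiniteDimensional ℂ W := FiniteDimensional.span_of_finite ℂ (Set.finite_range f)
      have hWrank : Module.finrank ℂ W = m := by
        rw [hW, finrank_span_eq_card hf, Fintype.card_fin]
      let u0 := (stdOrthonormalBasis ℂ W).reindex (finCongr hWrank)
      let u : Fin m → H := fun j => (((u0 j : V) : H))
      have hu : Orthonormal ℂ u := by
        have h1 : Orthonormal ℂ (fun j => (u0 j : V)) :=
          u0.orthonormal.comp_linearIsometry W.subtypeₗᵢ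
        exact h1.comp_linearIsometry V.subtypeₗᵢ
      have humem : ∀ j, (u j) ∈ V := fun j => ((u0 j : V)).2
      have hP := aux_parseval e u hu
      have hle : ∀ i, (∑ j, ‖(inner ℂ (u j) (e i) : ℂ)‖ ^ 2) ≤ |μ i| := by
        intro i
        rw [habs_eq i]
        have hb := hu.sum_inner_products_le (s := Finset.univ) (p (e i))
        have heq : ∀ j, (inner ℂ (u j) (p (e i)) : ℂ) = inner ℂ (u j) (e i) := by
          intro j
          rw [← hsym' (u j) (e i), hfix _ (humem j)]
        calc (∑ j, ‖(inner ℂ (u j) (e i) : ℂ)‖ ^ 2)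
            = ∑ j, ‖(inner ℂ (u j) (p (e i)) : ℂ)‖ ^ 2 :=
              Finset.sum_congr rfl fun j _ => by rw [heq j]
          _ ≤ ‖p (e i)‖ ^ 2 := hb
      have hmle : (m : ℝ) ≤ S := hasSum_le hle hP hs.hasSum
      exact absurd hmle (not_le.mpr hm)
    rw [tsum_eq_zero_of_not_summable hnotsum]
    positivity
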